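/- Let ρ_sc(x) := (1/(2π))·√(max(4−x², 0)) be the semicircle density. For every E ∈ (−2,2), the principal value integral of ρ_sc(x)/(x−E) equals −E/2; that is, lim_{ε→0⁺} ∫_{{x ∈ [−2,2] : |x−E| > ε}} ρ_sc(x)/(x−E) dx = −E/2. -/

import Mathlib

open Real MeasureTheory Filter

/-- The semicircle density `ρ_sc(x) = (1/(2π))·√((4−x²)₊)`. -/
noncomputable def semicircle (x : ℝ) : ℝ := (1 / (2 * π)) * Real.sqrt (max (4 - x ^ 2) 0)


noncomputable def scPhi (E x : ℝ) : ℝ :=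
  Real.sqrt (4 - x ^ 2) - E * Real.arcsin (x / 2) +
    Real.sqrt (4 - E ^ 2) * (Real.log (x - E) -
      Real.log (4 - E * x + Real.sqrt (4 - E ^ 2) * Real.sqrt (4 - x ^ 2)))

lemma scD_pos {E x : ℝ} (hE : E ∈ Set.Ioo (-2 : ℝ) 2) (hx : x ∈ Set.Icc (-2 : ℝ) 2) :
    0 < 4 - E * x + Real.sqrt (4 - E ^ 2) * Real.sqrt (4 - x ^ 2) := by
  have h1 : 0 ≤ Real.sqrt (4 - E ^ 2) * Real.sqrt (4 - x ^ 2) :=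
    mul_nonneg (Real.sqrt_nonneg _) (Real.sqrt_nonneg _)
  obtain ⟨hE1, hE2⟩ := hE; obtain ⟨hx1, hx2⟩ := hx
  have hEa : |E| < 2 := abs_lt.2 ⟨hE1, hE2⟩
  have hxa : |x| ≤ 2 := abs_le.2 ⟨hx1, hx2⟩
  have h2 : E * x ≤ |E| * |x| := (le_abs_self _).trans_eq (abs_mul E x)
  nlinarith [abs_nonneg E, abs_nonneg x]

lemma scPhi_hasDeriv {E x : ℝ} (hE : E ∈ Set.Ioo (-2 : ℝ) 2) (hx : x ∈ Set.Ioo (-2 : ℝ) 2)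
    (hne : x ≠ E) :
    HasDerivAt (scPhi E) (Real.sqrt (4 - x ^ 2) / (x - E)) x := by
  obtain ⟨hE1, hE2⟩ := hE
  obtain ⟨hx1, hx2⟩ := hx
  have h4x : (0:ℝ) < 4 - x ^ 2 := by nlinarith
  have h4E : (0:ℝ) < 4 - E ^ 2 := by nlinarith
  set q := Real.sqrt (4 - x ^ 2) with hqdef
  set r := Real.sqrt (4 - E ^ 2) with hrdef
  have hq0 : 0 < q := Real.sqrt_pos.2 h4x
  have hr0 : 0 < r := Real.sqrt_pos.2 h4E
  have hq : q ^ 2 = 4 - x ^ 2 := Real.sq_sqrt h4x.le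
  have hr : r ^ 2 = 4 - E ^ 2 := Real.sq_sqrt h4E.le
  have hxE : x - E ≠ 0 := sub_ne_zero.2 hne
  have hD : 0 < 4 - E * x + r * q := scD_pos ⟨hE1, hE2⟩ ⟨hx1.le, hx2.le⟩
  -- derivative of sqrt (4 - x^2)
  have hinner : HasDerivAt (fun y : ℝ => 4 - y ^ 2) (-(2 * x)) x := by
    simpa using (hasDerivAt_pow 2 x).const_sub 4
  have h1 : HasDerivAt (fun y : ℝ => Real.sqrt (4 - y ^ 2)) (-x / q) x := by
    have := (Real.hasDerivAt_sqrt h4x.ne').comp x hinner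
    refine this.congr_deriv ?_
    rw [hqdef]
    field_simp
  -- derivative of arcsin (x/2)
  have h2 : HasDerivAt (fun y : ℝ => Real.arcsin (y / 2)) (1 / q) x := by
    have ha : HasDerivAt (fun y : ℝ => y / 2) (1 / 2) x := by
      simpa using (hasDerivAt_id x).div_const 2
    have hb : (x / 2) ≠ -1 := by intro h; nlinarith [h]
    have hc : (x / 2) ≠ 1 := by intro h; nlinarith [h]
    have := (Real.hasDerivAt_arcsin hb hc).comp x ha
    refine this.congr_deriv ?_
    have hs : Real.sqrt (1 - (x / 2) ^ 2) = q / 2 := by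
      rw [show (1:ℝ) - (x / 2) ^ 2 = (q / 2) ^ 2 by linear_combination -hq / 4]
      exact Real.sqrt_sq (by positivity)
    rw [hs]
    field_simp
  -- derivative of log (x - E)
  have h3 : HasDerivAt (fun y : ℝ => Real.log (y - E)) (1 / (x - E)) x := by
    have := (Real.hasDerivAt_log hxE).comp x ((hasDerivAt_id x).sub_const E)
    refine this.congr_deriv ?_
    simp [one_div]
  -- derivative of log (4 - E x + r sqrt(4-x^2))
  have h4 : HasDerivAt (fun y : ℝ => Real.log (4 - E * y + r * Real.sqrt (4 - y ^ 2)))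
      ((-E + r * (-x / q)) / (4 - E * x + r * q)) x := by
    have hlin : HasDerivAt (fun y : ℝ => 4 - E * y) (-E) x := by
      simpa using ((hasDerivAt_id x).const_mul E).const_sub 4
    have hin : HasDerivAt (fun y : ℝ => 4 - E * y + r * Real.sqrt (4 - y ^ 2))
        (-E + r * (-x / q)) x := hlin.add (h1.const_mul r)
    have := (Real.hasDerivAt_log hD.ne').comp x hin
    refine this.congr_deriv ?_
    ring
  have hsum : HasDerivAt (scPhi E)
      (-x / q - E * (1 / q) + r * (1 / (x - E) - (-E + r * (-x / q)) / (4 - E * x + r * q))) x :=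
    ((h1.sub (h2.const_mul E)).add ((h3.sub h4).const_mul r))
  convert hsum using 1
  have hD' : 4 - x * E + q * r ≠ 0 := by linarith
  field_simp
  linear_combination (4 - x * E + q * r - r ^ 2) * hq + (r * q - (4 - x * E + q * r)) * hr

lemma scPhi_contOn {E : ℝ} (hE : E ∈ Set.Ioo (-2 : ℝ) 2) {s : Set ℝ}
    (hs : s ⊆ Set.Icc (-2 : ℝ) 2) (hEs : ∀ x ∈ s, x ≠ E) :
    ContinuousOn (scPhi E) s := by
  have c1 : Continuous fun x : ℝ => Real.sqrt (4 - x ^ 2) :=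
    Real.continuous_sqrt.comp (by continuity)
  have c2 : Continuous fun x : ℝ => Real.arcsin (x / 2) :=
    Real.continuous_arcsin.comp (by continuity)
  have c3 : ContinuousOn (fun x : ℝ => Real.log (x - E)) s :=
    ContinuousOn.log ((continuous_id.sub continuous_const).continuousOn)
      (fun x hx => sub_ne_zero.2 (hEs x hx))
  have c4 : ContinuousOn
      (fun x : ℝ => Real.log (4 - E * x + Real.sqrt (4 - E ^ 2) * Real.sqrt (4 - x ^ 2))) s :=
    ContinuousOn.log (((continuous_const.sub (continuous_const.mul continuous_id)).add
        (continuous_const.mul c1)).continuousOn)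
      (fun x hx => (scD_pos hE (hs hx)).ne')
  exact ((c1.continuousOn.sub (continuousOn_const.mul c2.continuousOn)).add
    (continuousOn_const.mul (c3.sub c4)))

lemma sc_ftc {E a b : ℝ} (hE : E ∈ Set.Ioo (-2 : ℝ) 2) (hab : a ≤ b) (ha : -2 ≤ a) (hb : b ≤ 2)
    (hEab : E ∉ Set.Icc a b) :
    ∫ x in a..b, Real.sqrt (4 - x ^ 2) / (x - E) = scPhi E b - scPhi E a := by
  have hsub : Set.Icc a b ⊆ Set.Icc (-2 : ℝ) 2 := Set.Icc_subset_Icc ha hb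
  have hne : ∀ x ∈ Set.Icc a b, x ≠ E := fun x hx h => hEab (h ▸ hx)
  have hcont : ContinuousOn (fun x : ℝ => Real.sqrt (4 - x ^ 2) / (x - E)) (Set.Icc a b) := by
    apply ContinuousOn.div
    · exact (Real.continuous_sqrt.comp (by continuity)).continuousOn
    · exact (continuous_id.sub continuous_const).continuousOn
    · exact fun x hx => sub_ne_zero.2 (hne x hx)
  apply intervalIntegral.integral_eq_sub_of_hasDeriv_right_of_le hab
    (scPhi_contOn hE hsub hne)
  · intro x hx
    have hx2 : x ∈ Set.Ioo (-2 : ℝ) 2 := ⟨lt_of_le_of_lt ha hx.1, lt_of_lt_of_le hx.2 hb⟩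
    exact (scPhi_hasDeriv hE hx2 (hne x ⟨hx.1.le, hx.2.le⟩)).hasDerivWithinAt
  · exact (hcont.mono (by rw [Set.uIcc_of_le hab])).intervalIntegrable

-- value lemma
lemma scPhi_boundary {E : ℝ} (hE : E ∈ Set.Ioo (-2 : ℝ) 2) :
    scPhi E 2 - scPhi E (-2) = -E * π := by
  obtain ⟨hE1, hE2⟩ := hE
  have h2E : (0:ℝ) < 2 - E := by linarith
  have h2E' : (0:ℝ) < 2 + E := by linarith
  unfold scPhi
  rw [show (4 : ℝ) - 2 ^ 2 = 0 by norm_num, show (4 : ℝ) - (-2) ^ 2 = 0 by norm_num,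
    Real.sqrt_zero, show (2 : ℝ) / 2 = 1 by norm_num, show (-2 : ℝ) / 2 = -1 by norm_num,
    Real.arcsin_one, Real.arcsin_neg_one, mul_zero, add_zero, add_zero,
    show (-2 : ℝ) - E = -(2 + E) by ring, Real.log_neg_eq_log,
    show (4 : ℝ) - E * 2 = 2 * (2 - E) by ring, show (4 : ℝ) - E * (-2) = 2 * (2 + E) by ring,
    Real.log_mul two_ne_zero h2E.ne', Real.log_mul two_ne_zero h2E'.ne']
  ring

lemma sc_diff_tendsto {E : ℝ} (hE : E ∈ Set.Ioo (-2 : ℝ) 2) :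
    Tendsto (fun ε : ℝ => scPhi E (E - ε) - scPhi E (E + ε)) (nhdsWithin 0 (Set.Ioi 0))
      (nhds 0) := by
  obtain ⟨hE1, hE2⟩ := hE
  have h4E : (0:ℝ) < 4 - E ^ 2 := by nlinarith
  set r := Real.sqrt (4 - E ^ 2) with hrdef
  set Ψ : ℝ → ℝ := fun ε =>
    (Real.sqrt (4 - (E - ε) ^ 2) - Real.sqrt (4 - (E + ε) ^ 2))
      - E * (Real.arcsin ((E - ε) / 2) - Real.arcsin ((E + ε) / 2))
      + r * (Real.log (4 - E * (E + ε) + r * Real.sqrt (4 - (E + ε) ^ 2))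
        - Real.log (4 - E * (E - ε) + r * Real.sqrt (4 - (E - ε) ^ 2))) with hΨ
  have heq : ∀ ε ∈ Set.Ioi (0:ℝ), scPhi E (E - ε) - scPhi E (E + ε) = Ψ ε := by
    intro ε hε
    simp only [hΨ, scPhi]
    rw [show E - ε - E = -ε by ring, show E + ε - E = ε by ring, Real.log_neg_eq_log]
    ring
  have hΨc : ContinuousAt Ψ 0 := by
    have c1 : Continuous fun ε : ℝ => Real.sqrt (4 - (E - ε) ^ 2) :=
      Real.continuous_sqrt.comp (by continuity)
    have c1' : Continuous fun ε : ℝ => Real.sqrt (4 - (E + ε) ^ 2) :=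
      Real.continuous_sqrt.comp (by continuity)
    have c2 : Continuous fun ε : ℝ => Real.arcsin ((E - ε) / 2) :=
      Real.continuous_arcsin.comp (by continuity)
    have c2' : Continuous fun ε : ℝ => Real.arcsin ((E + ε) / 2) :=
      Real.continuous_arcsin.comp (by continuity)
    have hrr : r * r = 4 - E ^ 2 := Real.mul_self_sqrt h4E.le
    have hr0 : Real.sqrt (4 - (E + (0:ℝ)) ^ 2) = r := by rw [add_zero]
    have hr0' : Real.sqrt (4 - (E - (0:ℝ)) ^ 2) = r := by rw [sub_zero]
    have c3 : ContinuousAt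
        (fun ε : ℝ => Real.log (4 - E * (E + ε) + r * Real.sqrt (4 - (E + ε) ^ 2))) 0 := by
      apply ContinuousAt.log
      · exact ((continuous_const.sub (continuous_const.mul (by continuity))).add
          (continuous_const.mul c1')).continuousAt
      · rw [hr0, hrr]; nlinarith
    have c3' : ContinuousAt
        (fun ε : ℝ => Real.log (4 - E * (E - ε) + r * Real.sqrt (4 - (E - ε) ^ 2))) 0 := by
      apply ContinuousAt.log
      · exact ((continuous_const.sub (continuous_const.mul (by continuity))).add
          (continuous_const.mul c1)).continuousAt
      · rw [hr0', hrr]; nlinarith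
    exact ((c1.continuousAt.sub c1'.continuousAt).sub
      (continuousAt_const.mul (c2.continuousAt.sub c2'.continuousAt))).add
      (continuousAt_const.mul (c3.sub c3'))
  have hΨ0 : Ψ 0 = 0 := by simp [hΨ]
  have : Tendsto Ψ (nhdsWithin 0 (Set.Ioi 0)) (nhds 0) := by
    have h := hΨc.tendsto
    rw [hΨ0] at h
    exact h.mono_left nhdsWithin_le_nhds
  exact Tendsto.congr' (by filter_upwards [self_mem_nhdsWithin] with ε hε using (heq ε hε).symm) this

/-- **Principal value of the Stieltjes transform of the semicircle law.** For every
`E ∈ (−2,2)`: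
`lim_{ε→0⁺} ∫_{x ∈ [−2,2], |x−E| > ε} ρ_sc(x)/(x−E) dx = −E/2`. -/
theorem semicircle_principal_value (E : ℝ) (hE : E ∈ Set.Ioo (-2 : ℝ) 2) :
    Tendsto (fun ε : ℝ =>
        ∫ x in {x : ℝ | x ∈ Set.Icc (-2 : ℝ) 2 ∧ ε < |x - E|}, semicircle x / (x - E))
      (nhdsWithin 0 (Set.Ioi 0)) (nhds (-E / 2)) := by
  obtain ⟨hE1, hE2⟩ := hE
  have hπ : (0:ℝ) < π := Real.pi_pos
  set δ := min (E + 2) (2 - E) with hδdef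
  have hδ0 : 0 < δ := lt_min (by linarith) (by linarith)
  have hG : Tendsto (fun ε : ℝ => (1 / (2 * π)) *
      ((scPhi E (E - ε) - scPhi E (E + ε)) + (scPhi E 2 - scPhi E (-2))))
      (nhdsWithin 0 (Set.Ioi 0)) (nhds (-E / 2)) := by
    have h1 := ((sc_diff_tendsto ⟨hE1, hE2⟩).add
      (tendsto_const_nhds (x := scPhi E 2 - scPhi E (-2)))).const_mul (1 / (2 * π))
    convert h1 using 2
    rw [scPhi_boundary ⟨hE1, hE2⟩]
    field_simp
    ring
  refine Tendsto.congr' ?_ hG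
  filter_upwards [Ioo_mem_nhdsGT_of_mem (Set.left_mem_Ico.2 hδ0)] with ε hε
  obtain ⟨hε0, hεδ⟩ := hε
  have hd1 : δ ≤ E + 2 := min_le_left _ _
  have hd2 : δ ≤ 2 - E := min_le_right _ _
  have hEm : -2 < E - ε := by linarith
  have hEp : E + ε < 2 := by linarith
  have hcsc : Continuous semicircle :=
    continuous_const.mul (Real.continuous_sqrt.comp (by continuity))
  set f : ℝ → ℝ := fun x => semicircle x / (x - E) with hfdef
  have hset : {x : ℝ | x ∈ Set.Icc (-2:ℝ) 2 ∧ ε < |x - E|}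
      = Set.Ico (-2:ℝ) (E - ε) ∪ Set.Ioc (E + ε) 2 := by
    ext x
    simp only [Set.mem_setOf_eq, Set.mem_Icc, Set.mem_union, Set.mem_Ico, Set.mem_Ioc, lt_abs]
    constructor
    · rintro ⟨⟨hx1, hx2⟩, h | h⟩
      · right; exact ⟨by linarith, hx2⟩
      · left; exact ⟨hx1, by linarith⟩
    · rintro (⟨hx1, hx2⟩ | ⟨hx1, hx2⟩)
      · exact ⟨⟨hx1, by linarith⟩, Or.inr (by linarith)⟩
      · exact ⟨⟨by linarith, hx2⟩, Or.inl (by linarith)⟩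
  have hcont1 : ContinuousOn f (Set.Icc (-2:ℝ) (E - ε)) := by
    apply hcsc.continuousOn.div (continuous_id.sub continuous_const).continuousOn
    intro x hx
    exact sub_ne_zero.2 (by have := hx.2; intro h; simp only [id_eq] at h; rw [h] at this; linarith)
  have hcont2 : ContinuousOn f (Set.Icc (E + ε) 2) := by
    apply hcsc.continuousOn.div (continuous_id.sub continuous_const).continuousOn
    intro x hx
    exact sub_ne_zero.2 (by have := hx.1; intro h; simp only [id_eq] at h; rw [h] at this; linarith)
  have hint1 : IntegrableOn f (Set.Ico (-2:ℝ) (E - ε)) volume :=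
    (hcont1.integrableOn_Icc).mono_set Set.Ico_subset_Icc_self
  have hint2 : IntegrableOn f (Set.Ioc (E + ε) 2) volume :=
    (hcont2.integrableOn_Icc).mono_set Set.Ioc_subset_Icc_self
  have hdisj : Disjoint (Set.Ico (-2:ℝ) (E - ε)) (Set.Ioc (E + ε) 2) := by
    apply Set.disjoint_left.2
    rintro x ⟨_, h1⟩ ⟨h2, _⟩
    linarith
  have e1 : ∫ x in Set.Ico (-2:ℝ) (E - ε), f x = ∫ x in (-2:ℝ)..(E - ε), f x := by
    rw [Measure.restrict_congr_set Ico_ae_eq_Ioc, ← intervalIntegral.integral_of_le (by linarith)]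
  have e2 : ∫ x in Set.Ioc (E + ε) 2, f x = ∫ x in (E + ε)..(2:ℝ), f x :=
    (intervalIntegral.integral_of_le (by linarith)).symm
  have congr1 : ∫ x in (-2:ℝ)..(E - ε), f x
      = (1/(2*π)) * ∫ x in (-2:ℝ)..(E - ε), Real.sqrt (4 - x ^ 2) / (x - E) := by
    rw [← intervalIntegral.integral_const_mul]
    apply intervalIntegral.integral_congr
    intro x hx
    rw [Set.uIcc_of_le (by linarith)] at hx
    have hm : max (4 - x ^ 2) 0 = 4 - x ^ 2 :=
      max_eq_left (by nlinarith [hx.1, hx.2, hEm.le, hEp.le])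
    simp only [hfdef, semicircle, hm]
    ring
  have congr2 : ∫ x in (E + ε)..(2:ℝ), f x
      = (1/(2*π)) * ∫ x in (E + ε)..(2:ℝ), Real.sqrt (4 - x ^ 2) / (x - E) := by
    rw [← intervalIntegral.integral_const_mul]
    apply intervalIntegral.integral_congr
    intro x hx
    rw [Set.uIcc_of_le (by linarith)] at hx
    have hm : max (4 - x ^ 2) 0 = 4 - x ^ 2 :=
      max_eq_left (by nlinarith [hx.1, hx.2])
    simp only [hfdef, semicircle, hm]
    ring
  have ftc1 : ∫ x in (-2:ℝ)..(E - ε), Real.sqrt (4 - x ^ 2) / (x - E)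
      = scPhi E (E - ε) - scPhi E (-2) :=
    sc_ftc ⟨hE1, hE2⟩ (by linarith) le_rfl (by linarith)
      (fun h => by have := h.2; linarith)
  have ftc2 : ∫ x in (E + ε)..(2:ℝ), Real.sqrt (4 - x ^ 2) / (x - E)
      = scPhi E 2 - scPhi E (E + ε) :=
    sc_ftc ⟨hE1, hE2⟩ (by linarith) (by linarith) le_rfl
      (fun h => by have := h.1; linarith)
  calc (1 / (2 * π)) * ((scPhi E (E - ε) - scPhi E (E + ε)) + (scPhi E 2 - scPhi E (-2)))
      = (1/(2*π)) * (scPhi E (E - ε) - scPhi E (-2))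
        + (1/(2*π)) * (scPhi E 2 - scPhi E (E + ε)) := by ring
    _ = ∫ x in {x : ℝ | x ∈ Set.Icc (-2:ℝ) 2 ∧ ε < |x - E|}, f x := by
        rw [hset, setIntegral_union hdisj measurableSet_Ioc hint1 hint2, e1, e2,
          congr1, congr2, ftc1, ftc2]
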